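/- arXiv:1011.5382 — 5 statements merged into one kernel-verified Lean document; each statement's English description precedes it below -/
import Mathlib

section
/- Let p be an odd prime and let W be a weighing matrix of order n and weight k, where p divides k but p² does not divide k. Then n is even and the 𝔽_p-code generated by the rows of W has dimension exactly n/2; hence it is a self-dual code. -/
def IsWeighing (n k : ℕ) (W : Matrix (Fin n) (Fin n) ℤ) : Prop :=
  (∀ i j, W i j = 0 ∨ W i j = 1 ∨ W i j = -1) ∧ W * W.transpose = (k : ℤ) • 1

theorem stmt_2 (n k : ℕ) (p : ℕ) [Fact p.Prime] (hodd : Odd p)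
    (hpk : p ∣ k) (hp2k : ¬ p ^ 2 ∣ k)
    (W : Matrix (Fin n) (Fin n) ℤ) (hW : IsWeighing n k W) :
    Even n ∧
      Module.finrank (ZMod p)
        (Submodule.span (ZMod p)
          (Set.range (fun i : Fin n => fun j : Fin n => ((W i j : ZMod p))))) = n / 2 := by
  obtain ⟨hent, hWWT⟩ := hW
  obtain ⟨m, hm⟩ := hpk
  have hpm : ¬ (p : ℤ) ∣ (m : ℤ) := by
    rw [Int.natCast_dvd_natCast]
    intro h
    exact hp2k (by rw [hm, pow_two]; exact mul_dvd_mul_left p h)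
  have hk0 : (k : ZMod p) = 0 := by
    rw [ZMod.natCast_eq_zero_iff]; exact Dvd.intro m hm.symm
  set M : Matrix (Fin n) (Fin n) (ZMod p) := Matrix.of fun i j => ((W i j : ZMod p)) with hMdef
  -- M * Mᵀ = 0
  have hMM : M * M.transpose = 0 := by
    ext i j
    have := congrArg (fun A : Matrix (Fin n) (Fin n) ℤ => ((A i j : ℤ) : ZMod p)) hWWT
    simp only [Matrix.mul_apply, Matrix.transpose_apply, Matrix.smul_apply,
      Matrix.one_apply, smul_eq_mul] at this
    push_cast at this
    simp only [Matrix.mul_apply, Matrix.transpose_apply, Matrix.zero_apply, hMdef,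
      Matrix.of_apply]
    rw [this, hk0, zero_mul]
  -- (a) range(mulVecLin Mᵀ) ≤ ker(mulVecLin M)
  have ha : LinearMap.range M.transpose.mulVecLin ≤ LinearMap.ker M.mulVecLin := by
    rintro x ⟨y, rfl⟩
    simp only [LinearMap.mem_ker, ← Matrix.mulVecLin_apply, ← LinearMap.comp_apply,
      ← Matrix.mulVecLin_mul, hMM]
    simp
  -- (b) ker(mulVecLin Mᵀ) ≤ range(mulVecLin M)
  have hb : LinearMap.ker M.transpose.mulVecLin ≤ LinearMap.range M.mulVecLin := by
    intro x hx
    -- lift x to ℤ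
    set xt : Fin n → ℤ := fun i => ((x i).val : ℤ) with hxt
    have hxcast : ∀ i, ((xt i : ℤ) : ZMod p) = x i := by
      intro i
      simp [hxt, ZMod.natCast_val, ZMod.cast_id]
    -- the integer vector Wᵀ *ᵥ xt has all entries divisible by p
    have hdvd : ∀ j, (p : ℤ) ∣ (W.transpose.mulVec xt) j := by
      intro j
      rw [← ZMod.intCast_zmod_eq_zero_iff_dvd]
      have hxj := congrFun hx j
      simp only [Matrix.mulVecLin_apply, Matrix.mulVec, dotProduct,
        Matrix.transpose_apply, Pi.zero_apply] at hxj ⊢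
      push_cast
      simp only [hxcast]
      simpa [hMdef] using hxj
    choose y hy using hdvd
    -- k • xt = p • (W *ᵥ y)
    have key : ∀ i, (m : ℤ) * xt i = (W.mulVec y) i := by
      intro i
      have h1 : (W * W.transpose).mulVec xt i = (k : ℤ) * xt i := by
        rw [hWWT]; simp [Matrix.smul_mulVec]
      rw [← Matrix.mulVec_mulVec] at h1
      have h2 : W.mulVec (W.transpose.mulVec xt) i = (p : ℤ) * (W.mulVec y) i := by
        have : W.transpose.mulVec xt = fun j => (p : ℤ) * y j := funext fun j => hy j
        rw [this]
        simp only [Matrix.mulVec, dotProduct, Finset.mul_sum]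
        exact Finset.sum_congr rfl fun j _ => by ring
      have hp0 : (p : ℤ) ≠ 0 := by exact_mod_cast (Fact.out : p.Prime).ne_zero
      have : (p : ℤ) * ((m : ℤ) * xt i) = (p : ℤ) * (W.mulVec y) i := by
        rw [← h2, h1, hm]; push_cast; ring
      exact mul_left_cancel₀ hp0 this
    -- push to ZMod p
    have hminv : (m : ZMod p) ≠ 0 := by
      rw [Ne, ZMod.natCast_eq_zero_iff]
      exact fun h => hpm (Int.natCast_dvd_natCast.mpr h)
    refine ⟨(m : ZMod p)⁻¹ • fun i => ((y i : ℤ) : ZMod p), ?_⟩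
    have hcol : M.mulVec (fun i => ((y i : ℤ) : ZMod p)) = (m : ZMod p) • x := by
      funext i
      have := congrArg (fun z : ℤ => ((z : ℤ) : ZMod p)) (key i)
      push_cast at this
      simp only [hxcast] at this
      simp only [Matrix.mulVec, dotProduct, hMdef, Matrix.of_apply, Pi.smul_apply,
        smul_eq_mul]
      rw [this]
      simp only [Matrix.mulVec, dotProduct]
      push_cast
      rfl
    rw [map_smul, Matrix.mulVecLin_apply, hcol, smul_smul,
      inv_mul_cancel₀ hminv, one_smul]
  -- counting
  have hrt : M.transpose.rank = M.rank := Matrix.rank_transpose M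
  have h1 := LinearMap.finrank_range_add_finrank_ker M.mulVecLin
  have h2 := LinearMap.finrank_range_add_finrank_ker M.transpose.mulVecLin
  simp only [Module.finrank_fintype_fun_eq_card, Fintype.card_fin] at h1 h2
  have hle1 : M.rank ≤ Module.finrank (ZMod p) (LinearMap.ker M.mulVecLin) := by
    rw [← hrt]
    exact Submodule.finrank_mono ha
  have hle2 : Module.finrank (ZMod p) (LinearMap.ker M.transpose.mulVecLin) ≤ M.rank :=
    Submodule.finrank_mono hb
  have hrr : M.transpose.rank = Module.finrank (ZMod p) (LinearMap.range M.transpose.mulVecLin) := rfl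
  have hr2 : M.rank = Module.finrank (ZMod p) (LinearMap.range M.mulVecLin) := rfl
  rw [← hr2] at h1
  rw [← hrr, hrt] at h2
  have hn : n = 2 * M.rank := by omega
  refine ⟨⟨M.rank, by omega⟩, ?_⟩
  have hspan : M.rank = Module.finrank (ZMod p)
      (Submodule.span (ZMod p)
        (Set.range (fun i : Fin n => fun j : Fin n => ((W i j : ZMod p))))) :=
    Matrix.rank_eq_finrank_span_row M
  omega
end

section
/- Let A₁ and A₂ be n×n circulant matrices with entries in {0,1,-1} satisfying A₁A₁ᵀ + A₂A₂ᵀ = k Iₙ. Then the 2n×2n block matrix W₁ = [[A₁, A₂], [-A₂ᵀ, A₁ᵀ]] is a weighing matrix of order 2n and weight k. -/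
def IsWeighingGen {m : Type*} [Fintype m] [DecidableEq m] (k : ℕ) (W : Matrix m m ℤ) : Prop :=
  (∀ i j, W i j = 0 ∨ W i j = 1 ∨ W i j = -1) ∧ W * W.transpose = (k : ℤ) • 1

theorem stmt_9 (n k : ℕ) (v₁ v₂ : Fin n → ℤ)
    (A₁ A₂ : Matrix (Fin n) (Fin n) ℤ)
    (hA₁ : A₁ = Matrix.circulant v₁) (hA₂ : A₂ = Matrix.circulant v₂)
    (he₁ : ∀ i j, A₁ i j = 0 ∨ A₁ i j = 1 ∨ A₁ i j = -1)
    (he₂ : ∀ i j, A₂ i j = 0 ∨ A₂ i j = 1 ∨ A₂ i j = -1)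
    (hsum : A₁ * A₁.transpose + A₂ * A₂.transpose = (k : ℤ) • 1) :
    IsWeighingGen k (Matrix.fromBlocks A₁ A₂ (-A₂.transpose) A₁.transpose) := by
  have comm : ∀ (u w : Fin n → ℤ),
      Matrix.circulant u * Matrix.circulant w = Matrix.circulant w * Matrix.circulant u := by
    intro u w
    cases n with
    | zero => ext i _; exact absurd i.2 (by omega)
    | succ m => exact Matrix.circulant_mul_comm u w
  have hcomm12 : A₁ * A₂ = A₂ * A₁ := by rw [hA₁, hA₂]; exact comm v₁ v₂
  have hT : ∀ (u : Fin n → ℤ), (Matrix.circulant u).transpose = Matrix.circulant fun i => u (-i) :=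
    Matrix.Fin.transpose_circulant
  have hcommT : A₁.transpose * A₂.transpose = A₂.transpose * A₁.transpose := by rw [hA₁, hA₂, hT, hT]; exact comm _ _
  have hself : ∀ (u : Fin n → ℤ), Matrix.circulant u * (Matrix.circulant u).transpose
      = (Matrix.circulant u).transpose * Matrix.circulant u := by
    intro u; rw [hT]; exact comm _ _
  constructor
  · intro i j
    cases i with
    | inl i => cases j with
      | inl j => exact he₁ i j
      | inr j => exact he₂ i j
    | inr i => cases j with
      | inl j =>
        simp only [Matrix.fromBlocks_apply₂₁, Matrix.neg_apply, Matrix.transpose_apply]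
        rcases he₂ j i with h | h | h <;> simp [h]
      | inr j => exact he₁ j i
  · rw [Matrix.fromBlocks_transpose, Matrix.fromBlocks_multiply]
    have brsum : A₂.transpose * A₂ + A₁.transpose * A₁ = (k : ℤ) • 1 := by
      rw [hA₁, hA₂] at *
      rw [← hself, ← hself, add_comm]; exact hsum
    have tr : A₁ * (-A₂.transpose).transpose + A₂ * A₁.transpose.transpose = 0 := by
      rw [Matrix.transpose_neg, Matrix.transpose_transpose, Matrix.transpose_transpose,
        Matrix.mul_neg, hcomm12]; exact neg_add_cancel _
    have bl : -A₂.transpose * A₁.transpose + A₁.transpose * A₂.transpose = 0 := by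
      rw [Matrix.neg_mul, hcommT]; exact neg_add_cancel _
    rw [tr, bl, hsum]
    rw [show -A₂.transpose * (-A₂.transpose).transpose + A₁.transpose * A₁.transpose.transpose
        = A₂.transpose * A₂ + A₁.transpose * A₁ by
      rw [Matrix.transpose_neg, Matrix.transpose_transpose, Matrix.transpose_transpose,
        Matrix.neg_mul, Matrix.mul_neg, neg_neg], brsum]
    rw [← Matrix.fromBlocks_one, Matrix.fromBlocks_smul]
    simp
end

section
/- Let A₁ and A₂ be n×n circulant matrices with entries in {0,1,-1} satisfying A₁A₁ᵀ + A₂A₂ᵀ = k Iₙ, and let R be the n×n back-diagonal permutation matrix (R_{ij} = 1 iff i + j - 1 = n, indices from 1). Then W₂ = [[A₁, A₂R], [-A₂R, A₁]] is a weighing matrix of order 2n and weight k. -/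
def backDiag (n : ℕ) : Matrix (Fin n) (Fin n) ℤ :=
  Matrix.of fun i j => if (i : ℕ) + (j : ℕ) + 1 = n then 1 else 0

lemma backDiag_apply (n : ℕ) (i j : Fin n) :
    backDiag n i j = if i = j.rev then 1 else 0 := by
  simp only [backDiag, Matrix.of_apply]
  congr 1
  simp only [eq_iff_iff, Fin.ext_iff, Fin.val_rev]
  omega

lemma mul_backDiag (n : ℕ) (A : Matrix (Fin n) (Fin n) ℤ) (i j : Fin n) :
    (A * backDiag n) i j = A i j.rev := by
  simp [Matrix.mul_apply, backDiag_apply, mul_ite]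

lemma backDiag_transpose (n : ℕ) : (backDiag n).transpose = backDiag n := by
  ext i j
  simp only [Matrix.transpose_apply, backDiag, Matrix.of_apply]
  rw [show (j : ℕ) + (i : ℕ) + 1 = (i : ℕ) + (j : ℕ) + 1 by omega]

lemma backDiag_mul_self (n : ℕ) : backDiag n * backDiag n = 1 := by
  ext i j
  rw [mul_backDiag, backDiag_apply]
  simp [Matrix.one_apply, Fin.rev_rev]

lemma circulant_mul_backDiag_symm (n : ℕ) (v : Fin n → ℤ) :
    (Matrix.circulant v * backDiag n).transpose = Matrix.circulant v * backDiag n := by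
  ext i j
  rw [Matrix.transpose_apply, mul_backDiag, mul_backDiag,
    Matrix.circulant_apply, Matrix.circulant_apply]
  congr 1
  simp only [Fin.ext_iff, Fin.sub_def, Fin.val_rev]
  congr 1
  omega

theorem stmt_10 (n k : ℕ) (v₁ v₂ : Fin n → ℤ)
    (A₁ A₂ : Matrix (Fin n) (Fin n) ℤ)
    (hA₁ : A₁ = Matrix.circulant v₁) (hA₂ : A₂ = Matrix.circulant v₂)
    (he₁ : ∀ i j, A₁ i j = 0 ∨ A₁ i j = 1 ∨ A₁ i j = -1)
    (he₂ : ∀ i j, A₂ i j = 0 ∨ A₂ i j = 1 ∨ A₂ i j = -1)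
    (hsum : A₁ * A₁.transpose + A₂ * A₂.transpose = (k : ℤ) • 1) :
    IsWeighingGen k
      (Matrix.fromBlocks A₁ (A₂ * backDiag n) (-(A₂ * backDiag n)) A₁) := by
  have hBt : (A₂ * backDiag n).transpose = A₂ * backDiag n := by
    rw [hA₂]; exact circulant_mul_backDiag_symm n v₂
  have hA₁Bt : (A₁ * backDiag n).transpose = A₁ * backDiag n := by
    rw [hA₁]; exact circulant_mul_backDiag_symm n v₁
  -- R * A₁ᵀ = A₁ * R
  have hRA₁ : backDiag n * A₁.transpose = A₁ * backDiag n := by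
    calc backDiag n * A₁.transpose
        = (backDiag n).transpose * A₁.transpose := by rw [backDiag_transpose]
      _ = (A₁ * backDiag n).transpose := by rw [Matrix.transpose_mul]
      _ = A₁ * backDiag n := hA₁Bt
  have hcomm : A₁ * A₂ = A₂ * A₁ := by
    rw [hA₁, hA₂]; exact Matrix.Fin.circulant_mul_comm v₁ v₂
  constructor
  · rintro (i | i) (j | j)
    · exact he₁ i j
    · rw [Matrix.fromBlocks_apply₁₂, mul_backDiag]; exact he₂ i j.rev
    · rw [Matrix.fromBlocks_apply₂₁]
      rcases he₂ i j.rev with h | h | h <;>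
        simp [Matrix.neg_apply, mul_backDiag, h]
    · exact he₁ i j
  · rw [Matrix.fromBlocks_transpose, Matrix.fromBlocks_multiply]
    have hB : (A₂ * backDiag n) * (A₂ * backDiag n) = A₂ * A₂.transpose := by
      nth_rewrite 2 [← hBt]
      rw [Matrix.transpose_mul, backDiag_transpose, Matrix.mul_assoc,
        ← Matrix.mul_assoc (backDiag n), backDiag_mul_self, Matrix.one_mul]
    have hoff : A₁ * (-(A₂ * backDiag n)).transpose + (A₂ * backDiag n) * A₁.transpose = 0 := by
      rw [Matrix.transpose_neg, hBt, Matrix.mul_assoc A₂, hRA₁, Matrix.mul_neg,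
        ← Matrix.mul_assoc, ← Matrix.mul_assoc, hcomm, neg_add_cancel]
    have hd : A₁ * A₁.transpose + (A₂ * backDiag n) * (A₂ * backDiag n).transpose
        = (k : ℤ) • 1 := by rw [hBt, hB, hsum]
    have hoff' : (-(A₂ * backDiag n)) * A₁.transpose + A₁ * (A₂ * backDiag n).transpose = 0 := by
      rw [Matrix.neg_mul, hBt, Matrix.mul_assoc A₂, hRA₁, ← Matrix.mul_assoc,
        ← Matrix.mul_assoc, hcomm, neg_add_cancel]
    have hd' : (-(A₂ * backDiag n)) * (-(A₂ * backDiag n)).transpose + A₁ * A₁.transpose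
        = (k : ℤ) • 1 := by
      rw [Matrix.transpose_neg, Matrix.neg_mul, Matrix.mul_neg, neg_neg, hBt, hB,
        add_comm, hsum]
    rw [hd, hoff, hoff', hd']
    rw [← Matrix.fromBlocks_one, Matrix.fromBlocks_smul, smul_zero]
end

section
/- If W is a weighing matrix of order n and weight k with n odd, then (n - k)² + (n - k) + 1 ≥ n. -/
open Finset

-- count nonzeros in a ±1/0 vector with square-sum k
lemma count_zero_aux {n k : ℕ} (f : Fin n → ℤ)
    (h1 : ∀ j, f j = 0 ∨ f j = 1 ∨ f j = -1)
    (h2 : ∑ j, f j * f j = (k : ℤ)) :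
    k ≤ n ∧ (univ.filter (fun j => f j = 0)).card = n - k := by
  have key : ∑ j, f j * f j = ((univ.filter (fun j => f j ≠ 0)).card : ℤ) := by
    rw [Finset.card_filter]
    push_cast
    refine Finset.sum_congr rfl fun j _ => ?_
    rcases h1 j with h | h | h <;> simp [h]
  have hcard : (univ.filter (fun j => f j ≠ 0)).card = k := by
    have := key.symm.trans h2
    exact_mod_cast this
  have hle : (univ.filter (fun j => f j ≠ 0)).card ≤ n := by
    simpa using Finset.card_filter_le univ (fun j => f j ≠ 0)
  have hsum := Finset.card_filter_add_card_filter_not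
    (s := (univ : Finset (Fin n))) (p := fun j => f j = 0)
  simp only [Finset.card_univ, Fintype.card_fin] at hsum
  constructor
  · omega
  · have : (univ.filter (fun j => ¬ f j = 0)).card = k := hcard
    omega

-- parity: two orthogonal rows share a common zero, given odd length
lemma common_zero_aux {n : ℕ} (hn : Odd n) (f g : Fin n → ℤ)
    (hf1 : ∀ j, f j = 0 ∨ f j = 1 ∨ f j = -1)
    (hg1 : ∀ j, g j = 0 ∨ g j = 1 ∨ g j = -1)
    (heven : Even ((univ.filter (fun j => f j = 0)).card
      + (univ.filter (fun j => g j = 0)).card))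
    (horth : ∑ j, f j * g j = 0) :
    ∃ c, f c = 0 ∧ g c = 0 := by
  classical
  set S : Finset (Fin n) := univ.filter (fun c => f c ≠ 0 ∧ g c ≠ 0) with hSdef
  set Zf : Finset (Fin n) := univ.filter (fun c => f c = 0) with hZf
  set Zg : Finset (Fin n) := univ.filter (fun c => g c = 0) with hZg
  have hsumS : ∑ c ∈ S, f c * g c = 0 := by
    rw [← horth]
    apply Finset.sum_subset (Finset.subset_univ S)
    intro c _ hc
    simp only [hSdef, Finset.mem_filter, Finset.mem_univ, true_and, not_and_or, not_not] at hc
    rcases hc with h | h <;> simp [h]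
  have hSeven : Even S.card := by
    have h2 : Even (∑ c ∈ S, (f c * g c - 1)) := by
      apply Finset.even_sum
      intro c hc
      simp only [hSdef, Finset.mem_filter, Finset.mem_univ, true_and] at hc
      rcases hf1 c with h | h | h <;> rcases hg1 c with h' | h' | h' <;>
        simp [h, h'] at hc ⊢
    rw [Finset.sum_sub_distrib, hsumS, Finset.sum_const, zero_sub] at h2
    have : Even ((S.card : ℤ)) := by
      simpa using h2.neg
    exact_mod_cast this
  have hcompl : S.card + (Zf ∪ Zg).card = n := by
    have := Finset.card_filter_add_card_filter_not
      (s := (univ : Finset (Fin n))) (p := fun c => f c ≠ 0 ∧ g c ≠ 0)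
    have hU : univ.filter (fun c => ¬ (f c ≠ 0 ∧ g c ≠ 0)) = Zf ∪ Zg := by
      ext c
      simp only [hZf, hZg, Finset.mem_filter, Finset.mem_univ, true_and, Finset.mem_union,
        not_and_or, not_not]
    rw [hU] at this
    simpa [Finset.card_univ] using this
  have hIU : (Zf ∪ Zg).card + (Zf ∩ Zg).card = Zf.card + Zg.card :=
    Finset.card_union_add_card_inter Zf Zg
  have hodd : Odd (Zf ∩ Zg).card := by
    rw [Nat.odd_iff]
    rw [Nat.odd_iff] at hn
    rw [Nat.even_iff] at hSeven heven
    omega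
  have hne : (Zf ∩ Zg).Nonempty := by
    rw [← Finset.card_pos]
    exact hodd.pos
  obtain ⟨c, hc⟩ := hne
  rw [Finset.mem_inter] at hc
  rw [hZf, Finset.mem_filter] at hc
  rw [hZg, Finset.mem_filter] at hc  -- fix
  exact ⟨c, hc.1.2, hc.2.2⟩


theorem stmt_12 (n k : ℕ) (hn : Odd n)
    (W : Matrix (Fin n) (Fin n) ℤ) (hW : IsWeighing n k W) :
    ((n : ℤ) - k) ^ 2 + ((n : ℤ) - k) + 1 ≥ n := by
  classical
  obtain ⟨hent, hmul⟩ := hW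
  have npos : 0 < n := hn.pos
  -- entrywise form of W * Wᵀ = k • 1
  have hentry : ∀ i j : Fin n, ∑ c, W i c * W j c = if i = j then (k : ℤ) else 0 := by
    intro i j
    have := congrFun (congrFun hmul i) j
    simpa [Matrix.mul_apply, Matrix.transpose_apply, Matrix.smul_apply, Matrix.one_apply,
      mul_ite] using this
  have hrowsum : ∀ i : Fin n, ∑ c, W i c * W i c = (k : ℤ) := by
    intro i; simpa using hentry i i
  -- rows: zero counts
  have hrow : ∀ i : Fin n, (univ.filter (fun c => W i c = 0)).card = n - k :=
    fun i => (count_zero_aux (W i) (hent i) (hrowsum i)).2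
  have hkn : k ≤ n := (count_zero_aux (W ⟨0, npos⟩) (hent _) (hrowsum _)).1
  rcases Nat.eq_zero_or_pos k with hk0 | hkpos
  · subst hk0
    have : (0:ℤ) ≤ ((n:ℤ) - 0) ^ 2 := sq_nonneg _
    push_cast
    nlinarith
  -- columns: Wᵀ * W = k • 1 over ℚ
  have hkQ : ((k:ℚ)) ≠ 0 := by exact_mod_cast hkpos.ne'
  set A : Matrix (Fin n) (Fin n) ℚ := W.map ((↑) : ℤ → ℚ) with hA
  have hAmul : A * A.transpose = (k : ℚ) • 1 := by
    ext i j
    have h := hentry i j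
    have : ((∑ c, W i c * W j c : ℤ) : ℚ) = if i = j then (k:ℚ) else 0 := by
      rw [h]; split <;> simp
    push_cast at this
    simpa [hA, Matrix.mul_apply, Matrix.transpose_apply, Matrix.map_apply, Matrix.smul_apply,
      Matrix.one_apply, mul_ite] using this
  have hABone : A * ((k:ℚ)⁻¹ • A.transpose) = 1 := by
    rw [Matrix.mul_smul, hAmul, smul_smul, inv_mul_cancel₀ hkQ, one_smul]
  have hBAone : ((k:ℚ)⁻¹ • A.transpose) * A = 1 := mul_eq_one_comm.mp hABone
  have hAtA : A.transpose * A = (k:ℚ) • 1 := by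
    have := congrArg (fun M => (k:ℚ) • M) hBAone
    simpa [Matrix.smul_mul, smul_smul, mul_inv_cancel₀ hkQ] using this
  have hcolsum : ∀ c : Fin n, ∑ i, W i c * W i c = (k : ℤ) := by
    intro c
    have h := congrFun (congrFun hAtA c) c
    have h' : ∑ i, (W i c : ℚ) * (W i c : ℚ) = (k:ℚ) := by
      simpa [hA, Matrix.mul_apply, Matrix.transpose_apply, Matrix.map_apply, Matrix.smul_apply,
        Matrix.one_apply] using h
    exact_mod_cast h'
  have hcol : ∀ c : Fin n, (univ.filter (fun i => W i c = 0)).card = n - k :=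
    fun c => (count_zero_aux (fun i => W i c) (fun i => hent i c) (hcolsum c)).2
  -- any two distinct rows share a common zero column
  have hcommon : ∀ i i' : Fin n, i ≠ i' → ∃ c, W i c = 0 ∧ W i' c = 0 := by
    intro i i' hne
    apply common_zero_aux hn (W i) (W i') (hent i) (hent i')
    · rw [hrow i, hrow i']
      exact ⟨n - k, by omega⟩
    · simpa [hne] using hentry i i'
  -- counting
  set m := n - k with hm
  set T : Finset ((Fin n × Fin n) × Fin n) :=
    univ.filter (fun q => q.1.1 ≠ q.1.2 ∧ W q.1.1 q.2 = 0 ∧ W q.1.2 q.2 = 0) with hT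
  -- lower bound: |offDiag| ≤ |T|
  have hlow : n * n - n ≤ T.card := by
    have hmaps : ∀ p : Fin n × Fin n, p ∈ (univ : Finset (Fin n)).offDiag →
        (p, if h : p.1 ≠ p.2 then (hcommon p.1 p.2 h).choose else ⟨0, npos⟩) ∈ T := by
      intro p hp
      rw [Finset.mem_offDiag] at hp
      have hne : p.1 ≠ p.2 := hp.2.2
      rw [hT, Finset.mem_filter]
      refine ⟨Finset.mem_univ _, hne, ?_⟩
      rw [dif_pos hne]
      exact (hcommon p.1 p.2 hne).choose_spec
    have hinj : Set.InjOn
        (fun p : Fin n × Fin n => (p, if h : p.1 ≠ p.2 then (hcommon p.1 p.2 h).choose else ⟨0, npos⟩))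
        ((univ : Finset (Fin n)).offDiag : Set (Fin n × Fin n)) := by
      intro p _ p' _ h
      exact congrArg Prod.fst h
    have := Finset.card_le_card_of_injOn _ hmaps hinj
    calc n * n - n = ((univ : Finset (Fin n)).offDiag).card := by
          rw [Finset.offDiag_card]; simp
      _ ≤ T.card := this
  -- upper bound: |T| ≤ n * (m * m)
  have hup : T.card ≤ n * (m * m) := by
    have hfib := Finset.card_eq_sum_card_fiberwise
      (f := fun q : (Fin n × Fin n) × Fin n => q.2) (s := T) (t := univ)
      (fun q _ => Finset.mem_univ _)
    rw [hfib]
    have hbound : ∀ c : Fin n, (T.filter (fun q => q.2 = c)).card ≤ m * m := by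
      intro c
      set Zc : Finset (Fin n) := univ.filter (fun i => W i c = 0) with hZc
      have : (T.filter (fun q => q.2 = c)).card ≤ (Zc ×ˢ Zc).card := by
        apply Finset.card_le_card_of_injOn (fun q => q.1)
        · intro q hq
          rw [Finset.mem_coe, Finset.mem_filter, hT, Finset.mem_filter] at hq
          obtain ⟨⟨-, -, h1, h2⟩, hc⟩ := hq
          subst hc
          rw [Finset.mem_coe, Finset.mem_product, hZc]
          constructor <;> rw [Finset.mem_filter] <;> exact ⟨Finset.mem_univ _, by assumption⟩
        · intro q hq q' hq' h
          rw [Finset.mem_coe, Finset.mem_filter] at hq hq'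
          exact Prod.ext h (hq.2.trans hq'.2.symm)
      calc (T.filter (fun q => q.2 = c)).card ≤ (Zc ×ˢ Zc).card := this
        _ = m * m := by rw [Finset.card_product, hZc, hcol c]
    calc ∑ c : Fin n, (T.filter (fun q => q.2 = c)).card
        ≤ ∑ _c : Fin n, m * m := Finset.sum_le_sum (fun c _ => hbound c)
      _ = n * (m * m) := by simp [mul_comm]
  -- conclude
  have hkey : n ≤ m * m + 1 := by
    have h1 : n * n - n ≤ n * (m * m) := le_trans hlow hup
    have heq : n * (n - 1) = n * n - n := by
      rw [show n - 1 = Nat.pred n from rfl, Nat.mul_pred, Nat.mul_comm]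
    have h2 : n * (n - 1) ≤ n * (m * m) := by rw [heq]; exact h1
    have := Nat.le_of_mul_le_mul_left h2 npos
    omega
  have hcast : ((n:ℤ) - k) = (m : ℤ) := by omega
  rw [hcast]
  have : (n : ℤ) ≤ (m:ℤ) * m + 1 := by exact_mod_cast hkey
  nlinarith
end

section
/- If W is a weighing matrix of order n and weight k with n ≡ 2 (mod 4) and k < n, then k ≤ n - 1 and k is a sum of two integer squares. -/
open Matrix

section Reflect

variable {m : Type*} [Fintype m]

/-- Reflection in the hyperplane orthogonal to `w` (identity if `w = 0`). -/
noncomputable def reflect (w x : m → ℚ) : m → ℚ :=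
  x - (2 * (x ⬝ᵥ w) / (w ⬝ᵥ w)) • w

lemma reflect_dot (w x y : m → ℚ) : reflect w x ⬝ᵥ reflect w y = x ⬝ᵥ y := by
  by_cases hw : w = 0
  · simp [reflect, hw]
  · have hww : w ⬝ᵥ w ≠ 0 := fun h => hw (dotProduct_self_eq_zero.mp h)
    simp only [reflect, sub_dotProduct, dotProduct_sub, smul_dotProduct, dotProduct_smul,
      smul_eq_mul]
    rw [dotProduct_comm w y]
    field_simp
    ring

lemma reflect_fixed {w x : m → ℚ} (h : x ⬝ᵥ w = 0) : reflect w x = x := by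
  simp [reflect, h]

lemma reflect_map {v u : m → ℚ} (h : v ⬝ᵥ v = u ⬝ᵥ u) : reflect (v - u) v = u := by
  by_cases hvu : v = u
  · simp [reflect, hvu]
  · have hw : (v - u) ⬝ᵥ (v - u) ≠ 0 := fun hz =>
      hvu (sub_eq_zero.mp (dotProduct_self_eq_zero.mp hz))
    have hww : (v - u) ⬝ᵥ (v - u) = 2 * (v ⬝ᵥ (v - u)) := by
      simp only [dotProduct_sub, sub_dotProduct]
      rw [dotProduct_comm u v]
      linarith
    unfold reflect
    rw [hww, div_self (by rw [← hww]; exact hw), one_smul, sub_sub_cancel]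

lemma witt (k : ℚ) (r : ℕ) (v u : ℕ → (m → ℚ))
    (hv : ∀ i j, i < r → j < r → v i ⬝ᵥ v j = if i = j then k else 0)
    (hu : ∀ i j, i < r → j < r → u i ⬝ᵥ u j = if i = j then k else 0) :
    ∃ f : (m → ℚ) → (m → ℚ), (∀ x y, f x ⬝ᵥ f y = x ⬝ᵥ y) ∧ ∀ i, i < r → f (v i) = u i := by
  induction r with
  | zero => exact ⟨id, fun _ _ => rfl, fun i hi => absurd hi (Nat.not_lt_zero i)⟩
  | succ r ih =>
    obtain ⟨f, hf, hfv⟩ := ih (fun i j hi hj => hv i j (by omega) (by omega))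
      (fun i j hi hj => hu i j (by omega) (by omega))
    refine ⟨fun x => reflect (f (v r) - u r) (f x), fun x y => by rw [reflect_dot, hf], ?_⟩
    intro i hi
    show reflect (f (v r) - u r) (f (v i)) = u i
    rcases Nat.lt_succ_iff_lt_or_eq.mp hi with h | rfl
    · rw [hfv i h]
      apply reflect_fixed
      have h1 : u i ⬝ᵥ f (v r) = 0 := by
        rw [← hfv i h, hf, hv i r (by omega) (by omega)]
        simp [Nat.ne_of_lt h]
      have h2 : u i ⬝ᵥ u r = 0 := by
        rw [hu i r (by omega) (by omega)]
        simp [Nat.ne_of_lt h]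
      rw [dotProduct_sub, h1, h2, sub_zero]
    · apply reflect_map
      rw [hf, hv i i (by omega) (by omega), hu i i (by omega) (by omega)]

end Reflect

/-- The quaternion-type matrix with `Q * Qᵀ = (a²+b²+c²+d²) • 1`. -/
def quat (a b c d : ℚ) : Matrix (Fin 4) (Fin 4) ℚ :=
  !![a, b, c, d; -b, a, -d, c; -c, d, a, -b; -d, -c, b, a]

lemma quat_row {k a b c d : ℚ} (h : a ^ 2 + b ^ 2 + c ^ 2 + d ^ 2 = k) (i j : Fin 4) :
    quat a b c d i ⬝ᵥ quat a b c d j = if i = j then k else 0 := by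
  fin_cases i <;> fin_cases j <;>
    simp [quat, dotProduct, Fin.sum_univ_four] <;>
    first
      | linear_combination h
      | ring

lemma quat_col {k a b c d : ℚ} (h : a ^ 2 + b ^ 2 + c ^ 2 + d ^ 2 = k) (c₁ c₂ : Fin 4) :
    (∑ i : Fin 4, quat a b c d i c₁ * quat a b c d i c₂) = if c₁ = c₂ then k else 0 := by
  fin_cases c₁ <;> fin_cases c₂ <;>
    simp [quat, Fin.sum_univ_four] <;>
    first
      | linear_combination h
      | ring

lemma reduce {ι : Type} [Fintype ι] [DecidableEq ι] (k : ℚ) (hk : k ≠ 0)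
    (a b c d : ℚ) (h4 : a ^ 2 + b ^ 2 + c ^ 2 + d ^ 2 = k)
    (M : Matrix (Fin 4 ⊕ ι) (Fin 4 ⊕ ι) ℚ) (hM : M * Mᵀ = k • 1) :
    ∃ N : Matrix ι ι ℚ, N * Nᵀ = k • 1 := by
  have hrow : ∀ i j, M i ⬝ᵥ M j = if i = j then k else 0 := by
    intro i j
    have h2 := congrFun (congrFun hM i) j
    simpa [Matrix.mul_apply, dotProduct, Matrix.one_apply, mul_ite, mul_one, mul_zero]
      using h2
  set Q := quat a b c d with hQ
  set u : ℕ → (Fin 4 ⊕ ι → ℚ) :=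
    fun i => if h : i < 4 then Sum.elim (Q ⟨i, h⟩) 0 else 0 with hu_def
  set v : ℕ → (Fin 4 ⊕ ι → ℚ) :=
    fun i => if h : i < 4 then M (Sum.inl ⟨i, h⟩) else 0 with hv_def
  have hdot2 : ∀ (f : Fin 4 → ℚ) (g : Fin 4 ⊕ ι → ℚ),
      Sum.elim f (0 : ι → ℚ) ⬝ᵥ g = ∑ c' : Fin 4, f c' * g (Sum.inl c') := by
    intro f g
    simp [dotProduct, Fintype.sum_sum_type]
  have hu : ∀ i j, i < 4 → j < 4 → u i ⬝ᵥ u j = if i = j then k else 0 := by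
    intro i j hi hj
    simp only [hu_def, dif_pos hi, dif_pos hj]
    rw [hdot2]
    have : ∑ c' : Fin 4, Q ⟨i, hi⟩ c' * Sum.elim (Q ⟨j, hj⟩) (0 : ι → ℚ) (Sum.inl c')
        = Q ⟨i, hi⟩ ⬝ᵥ Q ⟨j, hj⟩ := by simp [dotProduct]
    rw [this, quat_row h4]
    simp [Fin.mk.injEq]
  have hv : ∀ i j, i < 4 → j < 4 → v i ⬝ᵥ v j = if i = j then k else 0 := by
    intro i j hi hj
    simp only [hv_def, dif_pos hi, dif_pos hj]
    rw [hrow]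
    simp [Fin.mk.injEq]
  obtain ⟨f, hf, hfv⟩ := witt k 4 v u hv hu
  set w : ι → (Fin 4 ⊕ ι → ℚ) := fun j => f (M (Sum.inr j)) with hw_def
  have hww : ∀ j j', w j ⬝ᵥ w j' = if j = j' then k else 0 := by
    intro j j'
    rw [hw_def]
    simp only
    rw [hf, hrow]
    simp [Sum.inr.injEq]
  have huw : ∀ (i : Fin 4) j, Sum.elim (Q i) (0 : ι → ℚ) ⬝ᵥ w j = 0 := by
    intro i j
    have h1 : u (i : ℕ) = Sum.elim (Q i) 0 := by
      simp only [hu_def, dif_pos i.isLt, Fin.eta]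
    have h2 : v (i : ℕ) = M (Sum.inl i) := by
      simp only [hv_def, dif_pos i.isLt, Fin.eta]
    rw [← h1, ← hfv i i.isLt, hw_def]
    simp only
    rw [hf, h2, hrow]
    simp
  have hwzero : ∀ j (c : Fin 4), w j (Sum.inl c) = 0 := by
    intro j c
    have key : k * w j (Sum.inl c)
        = ∑ i : Fin 4, Q i c * (Sum.elim (Q i) (0 : ι → ℚ) ⬝ᵥ w j) := by
      simp_rw [hdot2, Finset.mul_sum, ← mul_assoc]
      rw [Finset.sum_comm]
      simp_rw [← Finset.sum_mul, hQ, quat_col h4]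
      simp
    have : k * w j (Sum.inl c) = 0 := by
      rw [key]
      simp [huw]
    exact (mul_eq_zero.mp this).resolve_left hk
  refine ⟨Matrix.of fun j c => w j (Sum.inr c), ?_⟩
  ext j j'
  have : w j ⬝ᵥ w j' = ∑ c : ι, w j (Sum.inr c) * w j' (Sum.inr c) := by
    simp [dotProduct, Fintype.sum_sum_type, hwzero]
  rw [Matrix.mul_apply]
  simp only [Matrix.transpose_apply, Matrix.smul_apply, Matrix.one_apply, smul_eq_mul,
    mul_ite, mul_one, mul_zero, Matrix.of_apply]
  rw [show ∑ c : ι, w j (Sum.inr c) * w j' (Sum.inr c) = w j ⬝ᵥ w j' from this.symm, hww]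

lemma descent (k : ℚ) (hk : k ≠ 0) (a b c d : ℚ) (h4 : a ^ 2 + b ^ 2 + c ^ 2 + d ^ 2 = k) :
    ∀ m : ℕ, (∃ M : Matrix (Fin (2 + 4 * m)) (Fin (2 + 4 * m)) ℚ, M * Mᵀ = k • 1) →
      ∃ M : Matrix (Fin 2) (Fin 2) ℚ, M * Mᵀ = k • 1 := by
  intro m
  induction m with
  | zero => exact fun h => h
  | succ m ih =>
    rintro ⟨M, hM⟩
    have e : Fin 4 ⊕ Fin (2 + 4 * m) ≃ Fin (2 + 4 * (m + 1)) :=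
      finSumFinEquiv.trans (finCongr (by ring))
    have hM' : (M.submatrix e e) * (M.submatrix e e)ᵀ = k • 1 := by
      rw [Matrix.transpose_submatrix, Matrix.submatrix_mul_equiv, hM]
      ext i j
      simp [Matrix.submatrix_apply, Matrix.smul_apply, Matrix.one_apply,
        EmbeddingLike.apply_eq_iff_eq]
    exact ih (reduce k hk a b c d h4 (M.submatrix e e) hM')

lemma rat_sos (k : ℕ) (p q : ℚ) (h : p ^ 2 + q ^ 2 = (k : ℚ)) :
    ∃ a b : ℕ, k = a ^ 2 + b ^ 2 := by
  rcases Nat.eq_zero_or_pos k with rfl | hk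
  · exact ⟨0, 0, rfl⟩
  rw [Nat.eq_sq_add_sq_iff]
  intro q' hq' hq3
  haveI : Fact q'.Prime := ⟨Nat.prime_of_mem_primeFactors hq'⟩
  have hpd : (p.den : ℚ) ≠ 0 := Nat.cast_ne_zero.mpr p.den_nz
  have hqd : (q.den : ℚ) ≠ 0 := Nat.cast_ne_zero.mpr q.den_nz
  have hp : (p.num : ℚ) = p * p.den := (div_eq_iff hpd).mp (Rat.num_div_den p)
  have hq : (q.num : ℚ) = q * q.den := (div_eq_iff hqd).mp (Rat.num_div_den q)
  set A : ℤ := p.num * q.den with hA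
  set B : ℤ := q.num * p.den with hB
  set D : ℕ := p.den * q.den with hD
  have keyQ : (k : ℚ) * (D : ℚ) ^ 2 = (A : ℚ) ^ 2 + (B : ℚ) ^ 2 := by
    push_cast [hA, hB, hD]
    rw [hp, hq]
    linear_combination ((p.den : ℚ) * q.den) ^ 2 * h.symm
  have keyZ : (k : ℤ) * (D : ℤ) ^ 2 = A ^ 2 + B ^ 2 := by exact_mod_cast keyQ
  have keyN : k * D ^ 2 = A.natAbs ^ 2 + B.natAbs ^ 2 := by
    have : ((k * D ^ 2 : ℕ) : ℤ) = ((A.natAbs ^ 2 + B.natAbs ^ 2 : ℕ) : ℤ) := by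
      push_cast [sq_abs]
      exact keyZ
    exact_mod_cast this
  have hD0 : D ≠ 0 := Nat.mul_ne_zero p.den_nz q.den_nz
  have hev := Nat.eq_sq_add_sq_iff.mp ⟨A.natAbs, B.natAbs, keyN⟩ q' (Nat.mem_primeFactors.mpr ⟨Nat.prime_of_mem_primeFactors hq',
    dvd_mul_of_dvd_left (Nat.dvd_of_mem_primeFactors hq') _, by positivity⟩) hq3
  rw [padicValNat.mul hk.ne' (pow_ne_zero 2 hD0),
    padicValNat.pow _ 2] at hev
  exact (Nat.even_add.mp hev).mpr (even_two_mul _)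

theorem stmt_13 (n k : ℕ) (hn : n % 4 = 2) (hk : k < n)
    (W : Matrix (Fin n) (Fin n) ℤ) (hW : IsWeighing n k W) :
    k ≤ n - 1 ∧ ∃ a b : ℕ, k = a ^ 2 + b ^ 2 := by
  refine ⟨by omega, ?_⟩
  rcases Nat.eq_zero_or_pos k with rfl | hk0
  · exact ⟨0, 0, rfl⟩
  have hkq : (k : ℚ) ≠ 0 := Nat.cast_ne_zero.mpr hk0.ne'
  obtain ⟨a, b, c, d, habcd⟩ := Nat.sum_four_squares k
  have h4 : (a : ℚ) ^ 2 + (b : ℚ) ^ 2 + (c : ℚ) ^ 2 + (d : ℚ) ^ 2 = (k : ℚ) := by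
    exact_mod_cast congrArg (Nat.cast : ℕ → ℚ) habcd
  have hM0 : ∃ M : Matrix (Fin n) (Fin n) ℚ, M * Mᵀ = (k : ℚ) • 1 := by
    refine ⟨W.map (Int.cast), ?_⟩
    ext i j
    have h2 := congrFun (congrFun hW.2 i) j
    simp only [Matrix.mul_apply, Matrix.transpose_apply, Matrix.smul_apply, Matrix.one_apply,
      smul_eq_mul, mul_ite, mul_one, mul_zero] at h2 ⊢
    simp only [Matrix.map_apply]
    have : ((∑ x, W i x * W j x : ℤ) : ℚ) = ∑ x, (W i x : ℚ) * (W j x : ℚ) := by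
      push_cast; rfl
    rw [← this, h2]
    split <;> simp
  obtain ⟨m, hm⟩ : ∃ m, n = 2 + 4 * m := ⟨n / 4, by omega⟩
  subst hm
  obtain ⟨M, hM⟩ := descent (k : ℚ) hkq a b c d h4 m hM0
  have hbase := congrFun (congrFun hM 0) 0
  simp only [Matrix.mul_apply, Matrix.transpose_apply, Fin.sum_univ_two, Matrix.smul_apply,
    Matrix.one_apply_eq, smul_eq_mul, mul_one] at hbase
  exact rat_sos k (M 0 0) (M 0 1) (by linear_combination hbase)
end
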